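/- For r ≥ 3, the fault-tolerant metric dimension of the r-dimensional Benes network B(r) equals 3·2^r. -/

import Mathlib

open SimpleGraph

variable {V : Type*}

/-- `S` is a resolving set of `G`. -/
def ResSet (G : SimpleGraph V) (S : Set V) : Prop :=
  ∀ x y : V, x ≠ y → ∃ w ∈ S, G.dist x w ≠ G.dist y w

/-- `S` is a fault-tolerant resolving set of `G`. -/
def FTResSet (G : SimpleGraph V) (S : Set V) : Prop :=
  ResSet G S ∧ ∀ x ∈ S, ResSet G (S \ {x})

/-- Metric dimension. -/
noncomputable def md (G : SimpleGraph V) : ℕ :=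
  sInf {n | ∃ S : Set V, S.ncard = n ∧ ResSet G S}

/-- Fault-tolerant metric dimension. -/
noncomputable def ftmd (G : SimpleGraph V) : ℕ :=
  sInf {n | ∃ S : Set V, S.ncard = n ∧ FTResSet G S}

/-- `u` and `v` are twins: distinct and with equal open or equal closed neighborhoods. -/
def IsTwinPair (G : SimpleGraph V) (u v : V) : Prop :=
  u ≠ v ∧ (G.neighborSet u = G.neighborSet v ∨
    G.neighborSet u ∪ {u} = G.neighborSet v ∪ {v})

/-- `u` is a twin vertex. -/
def IsTwin (G : SimpleGraph V) (u : V) : Prop := ∃ v, IsTwinPair G u v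

/-- Adjacency in the Benes network `B(r)`: `(s,j) ~ (s',j+1)` iff `s = s'` or they differ
exactly in bit `j+1` (when `j ≤ r-1`) resp. bit `2r-j` (when `j ≥ r`); bit `b` is index `b-1`. -/
def BenesAdj (r : ℕ) (u v : (Fin r → Bool) × Fin (2 * r + 1)) : Prop :=
  ∃ j : ℕ, ((u.2.val = j ∧ v.2.val = j + 1) ∨ (v.2.val = j ∧ u.2.val = j + 1)) ∧
    (u.1 = v.1 ∨ ∃ k : Fin r, k.val + 1 = (if j < r then j + 1 else 2 * r - j) ∧
      u.1 k ≠ v.1 k ∧ ∀ i : Fin r, i ≠ k → u.1 i = v.1 i)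

/-- The `r`-dimensional Benes network `B(r)`. -/
def Benes (r : ℕ) : SimpleGraph ((Fin r → Bool) × Fin (2 * r + 1)) where
  Adj u v := BenesAdj r u v
  symm := by
    constructor
    rintro u v ⟨j, h1, h2⟩
    refine ⟨j, h1.symm, ?_⟩
    rcases h2 with h | ⟨k, hk, hne, hall⟩
    · exact Or.inl h.symm
    · exact Or.inr ⟨k, hk, hne.symm, fun i hi => (hall i hi).symm⟩
  loopless := by
    constructor
    rintro u ⟨j, h1 | h1, -⟩ <;> omega

namespace BenesAux

abbrev BV (r : ℕ) := (Fin r → Bool) × Fin (2 * r + 1)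

variable {r : ℕ}

lemma adj_level {u v : BV r} (h : (Benes r).Adj u v) :
    u.2.val + 1 = v.2.val ∨ v.2.val + 1 = u.2.val := by
  obtain ⟨j, hj, -⟩ := h
  omega

lemma adj_bit {u v : BV r} (h : (Benes r).Adj u v) {b : Fin r} (hb : u.1 b ≠ v.1 b) :
    ((u.2.val = b.val ∧ v.2.val = b.val + 1) ∨ (v.2.val = b.val ∧ u.2.val = b.val + 1)) ∨
    ((u.2.val = 2*r - (b.val+1) ∧ v.2.val = 2*r - b.val) ∨
     (v.2.val = 2*r - (b.val+1) ∧ u.2.val = 2*r - b.val)) := by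
  obtain ⟨j, hj, hbit⟩ := h
  rcases hbit with heq | ⟨k, hk, hne, hall⟩
  · exact absurd (congrFun heq b) hb
  · have hbk : b = k := by
      by_contra hbk
      exact hb (hall b hbk)
    have hbr := b.isLt
    have hu := u.2.isLt
    have hv := v.2.isLt
    subst hbk
    by_cases hjr : j < r
    · rw [if_pos hjr] at hk; left; omega
    · rw [if_neg hjr] at hk; right; omega

lemma walk_level {u v : BV r} (p : (Benes r).Walk u v) :
    u.2.val ≤ v.2.val + p.length ∧ v.2.val ≤ u.2.val + p.length := by
  induction p with
  | nil => simp
  | cons h q ih =>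
    have := adj_level h
    simp only [SimpleGraph.Walk.length_cons]
    omega

lemma walk_split {u v z : BV r} (p : (Benes r).Walk u v) (hz : z ∈ p.support) :
    ∃ L1 L2 : ℕ, L1 + L2 = p.length ∧
      u.2.val ≤ z.2.val + L1 ∧ z.2.val ≤ u.2.val + L1 ∧
      z.2.val ≤ v.2.val + L2 ∧ v.2.val ≤ z.2.val + L2 := by
  classical
  have hspec : ((p.takeUntil z hz).append (p.dropUntil z hz)).length = p.length := by
    rw [p.take_spec hz]
  rw [SimpleGraph.Walk.length_append] at hspec
  obtain ⟨a1, a2⟩ := walk_level (p.takeUntil z hz)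
  obtain ⟨a3, a4⟩ := walk_level (p.dropUntil z hz)
  exact ⟨(p.takeUntil z hz).length, (p.dropUntil z hz).length, hspec, a1, a2, a3, a4⟩

lemma walk_touch {u v : BV r} (p : (Benes r).Walk u v) {b : Fin r} (hb : u.1 b ≠ v.1 b) :
    ∃ z ∈ p.support, ∃ z' ∈ p.support,
      ((z.2.val = b.val ∧ z'.2.val = b.val + 1) ∨
       (z.2.val = 2*r - (b.val+1) ∧ z'.2.val = 2*r - b.val)) := by
  induction p with
  | nil => exact absurd rfl hb
  | @cons x y w h q ih =>
    by_cases hxy : x.1 b = y.1 b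
    · have hb' : y.1 b ≠ w.1 b := by rw [← hxy]; exact hb
      obtain ⟨z, hz, z', hz', hc⟩ := ih hb'
      exact ⟨z, by simp [hz], z', by simp [hz'], hc⟩
    · have hx : x ∈ (SimpleGraph.Walk.cons h q).support := SimpleGraph.Walk.start_mem_support _
      have hy : y ∈ (SimpleGraph.Walk.cons h q).support := by
        simp [SimpleGraph.Walk.support_cons]
      rcases adj_bit h hxy with (⟨h1, h2⟩ | ⟨h1, h2⟩) | (⟨h1, h2⟩ | ⟨h1, h2⟩)
      · exact ⟨x, hx, y, hy, Or.inl ⟨h1, h2⟩⟩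
      · exact ⟨y, hy, x, hx, Or.inl ⟨h1, h2⟩⟩
      · exact ⟨x, hx, y, hy, Or.inr ⟨h1, h2⟩⟩
      · exact ⟨y, hy, x, hx, Or.inr ⟨h1, h2⟩⟩

lemma straight_walk (s : Fin r → Bool) :
    ∀ (d : ℕ) (a c : Fin (2*r+1)), a.val = c.val + d →
      ∃ p : (Benes r).Walk (s, a) (s, c), p.length = d := by
  intro d
  induction d with
  | zero =>
    intro a c h
    have : a = c := Fin.ext (by omega)
    subst this
    exact ⟨SimpleGraph.Walk.nil, rfl⟩
  | succ n ih =>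
    intro a c h
    have hlt : c.val + n < 2*r+1 := by have := a.isLt; omega
    obtain ⟨p, hp⟩ := ih ⟨c.val + n, hlt⟩ c rfl
    have hadj : (Benes r).Adj (s, a) (s, ⟨c.val + n, hlt⟩) :=
      ⟨c.val + n, Or.inr ⟨rfl, show a.val = (c.val + n) + 1 by omega⟩, Or.inl rfl⟩
    exact ⟨SimpleGraph.Walk.cons hadj p, by simp [hp]⟩

end BenesAux

namespace BenesAux

variable {r : ℕ}

def lv0 (r : ℕ) : Fin (2*r+1) := ⟨0, by omega⟩
def lvMid (r : ℕ) : Fin (2*r+1) := ⟨r, by omega⟩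
def lvTop (r : ℕ) : Fin (2*r+1) := ⟨2*r, by omega⟩

@[simp] lemma lv0_val : (lv0 r).val = 0 := rfl
@[simp] lemma lvMid_val : (lvMid r).val = r := rfl
@[simp] lemma lvTop_val : (lvTop r).val = 2*r := rfl

lemma reachable_flip (s : Fin r → Bool) (k : Fin r) (v : Bool) (hv : s k ≠ v) :
    (Benes r).Reachable ((s, lv0 r) : BV r) (Function.update s k v, lv0 r) := by
  have h1 : k.val < 2*r+1 := by have := k.isLt; omega
  have h2 : k.val + 1 < 2*r+1 := by have := k.isLt; omega
  obtain ⟨p1, _⟩ := straight_walk s k.val ⟨k.val, h1⟩ (lv0 r) (by simp)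
  obtain ⟨p2, _⟩ := straight_walk (Function.update s k v) (k.val+1) ⟨k.val+1, h2⟩ (lv0 r) (by simp)
  have hadj : (Benes r).Adj (s, ⟨k.val, h1⟩) (Function.update s k v, ⟨k.val+1, h2⟩) := by
    refine ⟨k.val, Or.inl ⟨rfl, rfl⟩, Or.inr ⟨k, ?_, ?_, ?_⟩⟩
    · rw [if_pos k.isLt]
    · simpa using hv
    · intro i hi
      simp [Function.update_of_ne hi]
  exact (p1.reachable.symm.trans hadj.reachable).trans p2.reachable

lemma reachable_zero (s t : Fin r → Bool) :
    (Benes r).Reachable ((s, lv0 r) : BV r) (t, lv0 r) := by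
  classical
  generalize hn : (Finset.univ.filter fun k => s k ≠ t k).card = n
  induction n generalizing s with
  | zero =>
    have hst : s = t := by
      funext k
      by_contra hk
      have hmem : k ∈ Finset.univ.filter fun k => s k ≠ t k := by simp [hk]
      rw [Finset.card_eq_zero.mp hn] at hmem
      simp at hmem
    subst hst
    exact SimpleGraph.Reachable.refl _
  | succ n ih =>
    have hpos : 0 < (Finset.univ.filter fun k => s k ≠ t k).card := by omega
    obtain ⟨k, hk⟩ := Finset.card_pos.mp hpos
    simp only [Finset.mem_filter, Finset.mem_univ, true_and] at hk
    have step := reachable_flip s k (t k) hk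
    refine step.trans (ih (Function.update s k (t k)) ?_)
    have hset : (Finset.univ.filter fun k' => Function.update s k (t k) k' ≠ t k')
        = (Finset.univ.filter fun k' => s k' ≠ t k').erase k := by
      ext i
      simp only [Finset.mem_filter, Finset.mem_univ, true_and, Finset.mem_erase]
      by_cases hik : i = k
      · subst hik; simp
      · simp [Function.update_of_ne hik, hik]
    rw [hset, Finset.card_erase_of_mem (by simp [hk]), hn]
    omega

lemma benes_reachable (u v : BV r) : (Benes r).Reachable u v := by
  obtain ⟨s, a⟩ := u
  obtain ⟨t, c⟩ := v
  obtain ⟨p1, _⟩ := straight_walk s a.val a (lv0 r) (by simp)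
  obtain ⟨p2, _⟩ := straight_walk t c.val c (lv0 r) (by simp)
  exact (p1.reachable.trans (reachable_zero s t)).trans p2.reachable.symm

lemma dist_straight (s : Fin r → Bool) (a c : Fin (2*r+1)) :
    (Benes r).dist (s,a) (s,c) + min a.val c.val = max a.val c.val := by
  rcases le_total c.val a.val with h | h
  · obtain ⟨p, hp⟩ := straight_walk s (a.val - c.val) a c (by omega)
    have h1 := SimpleGraph.dist_le p
    obtain ⟨q, hq⟩ := (p.reachable).exists_walk_length_eq_dist
    obtain ⟨h2, h3⟩ := walk_level q
    have ea : ((s, a) : BV r).2.val = a.val := rfl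
    have ec : ((s, c) : BV r).2.val = c.val := rfl
    rw [ea, ec] at *

    omega
  · obtain ⟨p, hp⟩ := straight_walk s (c.val - a.val) c a (by omega)
    have h1 := SimpleGraph.dist_le p
    obtain ⟨q, hq⟩ := (p.reachable).exists_walk_length_eq_dist
    obtain ⟨h2, h3⟩ := walk_level q
    have ea : ((s, a) : BV r).2.val = a.val := rfl
    have ec : ((s, c) : BV r).2.val = c.val := rfl
    rw [ea, ec] at *

    rw [SimpleGraph.dist_comm]
    omega

lemma dist_level_lb (u v : BV r) :
    u.2.val ≤ v.2.val + (Benes r).dist u v ∧ v.2.val ≤ u.2.val + (Benes r).dist u v := by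
  obtain ⟨q, hq⟩ := (benes_reachable u v).exists_walk_length_eq_dist
  have := walk_level q
  omega

lemma dist_bit_lb {u : BV r} {s : Fin r → Bool} {c : Fin (2*r+1)} {b : Fin r}
    (hb : u.1 b ≠ s b) :
    ∃ zl zh L1 L2 M1 M2 : ℕ,
      ((zl = b.val ∧ zh = b.val + 1) ∨ (zl = 2*r - (b.val+1) ∧ zh = 2*r - b.val)) ∧
      L1 + L2 ≤ (Benes r).dist u (s, c) ∧ M1 + M2 ≤ (Benes r).dist u (s, c) ∧
      u.2.val ≤ zl + L1 ∧ zl ≤ u.2.val + L1 ∧ zl ≤ c.val + L2 ∧ c.val ≤ zl + L2 ∧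
      u.2.val ≤ zh + M1 ∧ zh ≤ u.2.val + M1 ∧ zh ≤ c.val + M2 ∧ c.val ≤ zh + M2 := by
  obtain ⟨p, hp⟩ := (benes_reachable u (s, c)).exists_walk_length_eq_dist
  obtain ⟨z, hz, z', hz', hcase⟩ := walk_touch p hb
  obtain ⟨L1, L2, hL, a1, a2, a3, a4⟩ := walk_split p hz
  obtain ⟨M1, M2, hM, b1, b2, b3, b4⟩ := walk_split p hz'
  exact ⟨z.2.val, z'.2.val, L1, L2, M1, M2, hcase, by omega, by omega,
    a1, a2, a3, a4, b1, b2, b3, b4⟩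

end BenesAux

namespace BenesAux

variable {r : ℕ}

def TSet (r : ℕ) : Set (BV r) := {p | p.2.val = 0 ∨ p.2.val = r ∨ p.2.val = 2*r}

lemma lb_zero {t s : Fin r → Bool} {a : Fin (2*r+1)} {b : Fin r}
    (hb : t b ≠ s b) (har : a.val ≤ r) (hab : a.val ≤ b.val) :
    a.val < (Benes r).dist ((t, a) : BV r) (s, lv0 r) := by
  obtain ⟨zl, zh, L1, L2, M1, M2, hcase, hL, hM, a1, a2, a3, a4, b1, b2, b3, b4⟩ :=
    dist_bit_lb (u := ((t, a) : BV r)) (c := lv0 r) hb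
  have hbr := b.isLt
  have ea : ((t, a) : BV r).2.val = a.val := rfl
  rw [ea] at a1 a2 b1 b2
  rw [lv0_val] at a3 a4 b3 b4
  omega

lemma lb_top {t s : Fin r → Bool} {a : Fin (2*r+1)} {b : Fin r}
    (hb : t b ≠ s b) (hra : r < a.val) (hab : 2*r ≤ a.val + b.val) :
    2*r < (Benes r).dist ((t, a) : BV r) (s, lvTop r) + a.val := by
  obtain ⟨zl, zh, L1, L2, M1, M2, hcase, hL, hM, a1, a2, a3, a4, b1, b2, b3, b4⟩ :=
    dist_bit_lb (u := ((t, a) : BV r)) (c := lvTop r) hb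
  have hbr := b.isLt
  have haa := a.isLt
  have ea : ((t, a) : BV r).2.val = a.val := rfl
  rw [ea] at a1 a2 b1 b2
  rw [lvTop_val] at a3 a4 b3 b4
  omega

lemma lb_mid {t s : Fin r → Bool} {a : Fin (2*r+1)} {b : Fin r}
    (hb : t b ≠ s b) (h1 : b.val < a.val) (h2 : a.val + b.val < 2*r) :
    r < (Benes r).dist ((t, a) : BV r) (s, lvMid r) + min a.val (2*r - a.val) := by
  obtain ⟨zl, zh, L1, L2, M1, M2, hcase, hL, hM, a1, a2, a3, a4, b1, b2, b3, b4⟩ :=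
    dist_bit_lb (u := ((t, a) : BV r)) (c := lvMid r) hb
  have hbr := b.isLt
  have haa := a.isLt
  have ea : ((t, a) : BV r).2.val = a.val := rfl
  rw [ea] at a1 a2 b1 b2
  rw [lvMid_val] at a3 a4 b3 b4
  omega

lemma caseA (hr : 3 ≤ r) {s t : Fin r → Bool} {a c : Fin (2*r+1)} (hac : a.val < c.val) :
    ∃ w1 w2 : BV r, w1 ∈ TSet r ∧ w2 ∈ TSet r ∧ w1 ≠ w2 ∧
      (Benes r).dist (s, a) w1 ≠ (Benes r).dist (t, c) w1 ∧
      (Benes r).dist (s, a) w2 ≠ (Benes r).dist (t, c) w2 := by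
  refine ⟨(s, lv0 r), (t, lvTop r), Or.inl rfl, Or.inr (Or.inr rfl), ?_, ?_, ?_⟩
  · intro hw
    have := congrArg (fun p => p.2.val) hw
    simp only [lv0_val, lvTop_val] at this
    omega
  · have h1 := dist_straight s a (lv0 r)
    have h2 := (dist_level_lb ((t, c) : BV r) (s, lv0 r)).1
    have ec : ((t, c) : BV r).2.val = c.val := rfl
    have e0 : ((s, lv0 r) : BV r).2.val = 0 := rfl
    rw [ec, e0] at h2
    rw [lv0_val] at h1
    omega
  · have h1 := dist_straight t c (lvTop r)
    have h2 := (dist_level_lb ((s, a) : BV r) (t, lvTop r)).2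
    have haa := a.isLt
    have hcc := c.isLt
    have ea : ((s, a) : BV r).2.val = a.val := rfl
    have etp : ((t, lvTop r) : BV r).2.val = 2*r := rfl
    rw [ea, etp] at h2
    rw [lvTop_val] at h1
    omega

lemma caseB (hr : 3 ≤ r) {s t : Fin r → Bool} {a : Fin (2*r+1)} (hst : s ≠ t) :
    ∃ w1 w2 : BV r, w1 ∈ TSet r ∧ w2 ∈ TSet r ∧ w1 ≠ w2 ∧
      (Benes r).dist (s, a) w1 ≠ (Benes r).dist (t, a) w1 ∧
      (Benes r).dist (s, a) w2 ≠ (Benes r).dist (t, a) w2 := by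
  classical
  have haa := a.isLt
  obtain ⟨k, hk⟩ := Function.ne_iff.mp hst
  by_cases hbig : ∃ b : Fin r, s b ≠ t b ∧ min a.val (2*r - a.val) ≤ b.val
  · obtain ⟨b, hb, hbm⟩ := hbig
    have hbr := b.isLt
    by_cases har : a.val ≤ r
    · refine ⟨(s, lv0 r), (t, lv0 r), Or.inl rfl, Or.inl rfl, ?_, ?_, ?_⟩
      · intro hw; exact hst (congrArg Prod.fst hw)
      · have h1 := dist_straight s a (lv0 r)
        have h2 := lb_zero (b := b) (a := a) (Ne.symm hb) har (by omega)
        rw [lv0_val] at h1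
        omega
      · have h1 := dist_straight t a (lv0 r)
        have h2 := lb_zero (b := b) (a := a) hb har (by omega)
        rw [lv0_val] at h1
        omega
    · refine ⟨(s, lvTop r), (t, lvTop r), Or.inr (Or.inr rfl), Or.inr (Or.inr rfl), ?_, ?_, ?_⟩
      · intro hw; exact hst (congrArg Prod.fst hw)
      · have h1 := dist_straight s a (lvTop r)
        have h2 := lb_top (b := b) (a := a) (Ne.symm hb) (by omega) (by omega)
        rw [lvTop_val] at h1
        omega
      · have h1 := dist_straight t a (lvTop r)
        have h2 := lb_top (b := b) (a := a) hb (by omega) (by omega)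
        rw [lvTop_val] at h1
        omega
  · push_neg at hbig
    have hkm := hbig k hk
    refine ⟨(s, lvMid r), (t, lvMid r), Or.inr (Or.inl rfl), Or.inr (Or.inl rfl), ?_, ?_, ?_⟩
    · intro hw; exact hst (congrArg Prod.fst hw)
    · have h1 := dist_straight s a (lvMid r)
      have h2 := lb_mid (b := k) (a := a) (Ne.symm hk) (by omega) (by omega)
      rw [lvMid_val] at h1
      omega
    · have h1 := dist_straight t a (lvMid r)
      have h2 := lb_mid (b := k) (a := a) hk (by omega) (by omega)
      rw [lvMid_val] at h1
      omega

lemma master (hr : 3 ≤ r) {x y : BV r} (hxy : x ≠ y) :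
    ∃ w1 w2 : BV r, w1 ∈ TSet r ∧ w2 ∈ TSet r ∧ w1 ≠ w2 ∧
      (Benes r).dist x w1 ≠ (Benes r).dist y w1 ∧
      (Benes r).dist x w2 ≠ (Benes r).dist y w2 := by
  obtain ⟨s, a⟩ := x
  obtain ⟨t, c⟩ := y
  rcases lt_trichotomy a.val c.val with h | h | h
  · exact caseA hr h
  · have hac : a = c := Fin.ext h
    subst hac
    have hst : s ≠ t := fun hs => hxy (by rw [hs])
    exact caseB hr hst
  · obtain ⟨w1, w2, m1, m2, hne, d1, d2⟩ := caseA hr (s := t) (t := s) h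
    exact ⟨w1, w2, m1, m2, hne, Ne.symm d1, Ne.symm d2⟩

end BenesAux

namespace BenesAux

variable {r : ℕ}

@[simp] lemma val_mk {n m : ℕ} (h : m < n) : (⟨m, h⟩ : Fin n).val = m := rfl

lemma bit_or_flip {s z : Fin r → Bool} (k : Fin r)
    (h : s = z ∨ (s k ≠ z k ∧ ∀ i : Fin r, i ≠ k → s i = z i)) :
    Function.update s k (!(s k)) = z ∨
      ((Function.update s k (!(s k))) k ≠ z k ∧
        ∀ i : Fin r, i ≠ k → (Function.update s k (!(s k))) i = z i) := by
  classical
  rcases h with rfl | ⟨h1, h2⟩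
  · right
    refine ⟨by simp, fun i hi => by simp [Function.update_of_ne hi]⟩
  · left
    funext i
    by_cases hik : i = k
    · subst hik
      simp only [Function.update_self]
      cases hs : s i <;> cases hz : z i <;> simp_all
    · simp [Function.update_of_ne hik, h2 i hik]

lemma double_flip (s : Fin r → Bool) (k : Fin r) :
    Function.update (Function.update s k (!(s k))) k
      (!(Function.update s k (!(s k))) k) = s := by
  classical
  funext i
  by_cases h : i = k
  · subst h; simp
  · simp [Function.update_of_ne h]

/-- Characterization of adjacency from a level-0 vertex. -/
lemma adj_level0_iff (hr : 3 ≤ r) {s : Fin r → Bool} {a : Fin (2*r+1)} (ha : a.val = 0)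
    (z : BV r) :
    (Benes r).Adj (s, a) z ↔
      (z.2.val = 1 ∧ (s = z.1 ∨ (s ⟨0, by omega⟩ ≠ z.1 ⟨0, by omega⟩ ∧
        ∀ i : Fin r, i ≠ ⟨0, by omega⟩ → s i = z.1 i))) := by
  have h0r : 0 < r := by omega
  have ea : ((s, a) : BV r).2.val = a.val := rfl
  constructor
  · rintro ⟨j, hj, hbit⟩
    rw [ea] at hj
    have hz := z.2.isLt
    have hj0 : j = 0 := by omega
    subst hj0
    have hz1 : z.2.val = 1 := by omega
    rcases hbit with heq | ⟨k, hk, h1, h2⟩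
    · exact ⟨hz1, Or.inl heq⟩
    · rw [if_pos h0r] at hk
      have hk0 : k = ⟨0, h0r⟩ := Fin.ext (by simp only [val_mk]; omega)
      subst hk0
      exact ⟨hz1, Or.inr ⟨h1, h2⟩⟩
  · rintro ⟨hz1, hbit⟩
    refine ⟨0, Or.inl ⟨ha, hz1⟩, ?_⟩
    rcases hbit with heq | ⟨h1, h2⟩
    · exact Or.inl heq
    · refine Or.inr ⟨⟨0, h0r⟩, ?_, h1, h2⟩
      rw [if_pos h0r]

/-- Characterization of adjacency from a level-2r vertex. -/
lemma adj_top_iff (hr : 3 ≤ r) {s : Fin r → Bool} {a : Fin (2*r+1)} (ha : a.val = 2*r)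
    (z : BV r) :
    (Benes r).Adj (s, a) z ↔
      (z.2.val = 2*r - 1 ∧ (s = z.1 ∨ (s ⟨0, by omega⟩ ≠ z.1 ⟨0, by omega⟩ ∧
        ∀ i : Fin r, i ≠ ⟨0, by omega⟩ → s i = z.1 i))) := by
  have h0r : 0 < r := by omega
  have ea : ((s, a) : BV r).2.val = a.val := rfl
  constructor
  · rintro ⟨j, hj, hbit⟩
    rw [ea] at hj
    have hz := z.2.isLt
    have hj0 : j = 2*r - 1 := by omega
    subst hj0
    have hz1 : z.2.val = 2*r - 1 := by omega
    rcases hbit with heq | ⟨k, hk, h1, h2⟩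
    · exact ⟨hz1, Or.inl heq⟩
    · rw [if_neg (by omega : ¬ (2*r - 1 < r))] at hk
      have hk0 : k = ⟨0, h0r⟩ := Fin.ext (by simp only [val_mk]; omega)
      subst hk0
      exact ⟨hz1, Or.inr ⟨h1, h2⟩⟩
  · rintro ⟨hz1, hbit⟩
    refine ⟨2*r - 1, Or.inr ⟨hz1, show ((s, a) : BV r).2.val = 2*r - 1 + 1 by omega⟩, ?_⟩
    rcases hbit with heq | ⟨h1, h2⟩
    · exact Or.inl heq
    · refine Or.inr ⟨⟨0, h0r⟩, ?_, h1, h2⟩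
      rw [if_neg (by omega : ¬ (2*r - 1 < r))]
      simp only [val_mk]
      omega

/-- Characterization of adjacency from a level-r vertex. -/
lemma adj_mid_iff (hr : 3 ≤ r) {s : Fin r → Bool} {a : Fin (2*r+1)} (ha : a.val = r)
    (z : BV r) :
    (Benes r).Adj (s, a) z ↔
      ((z.2.val = r + 1 ∨ z.2.val = r - 1) ∧
        (s = z.1 ∨ (s ⟨r - 1, by omega⟩ ≠ z.1 ⟨r - 1, by omega⟩ ∧
          ∀ i : Fin r, i ≠ ⟨r - 1, by omega⟩ → s i = z.1 i))) := by
  have h0r : r - 1 < r := by omega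
  have ea : ((s, a) : BV r).2.val = a.val := rfl
  constructor
  · rintro ⟨j, hj, hbit⟩
    rw [ea] at hj
    have hz := z.2.isLt
    rcases hj with ⟨hj1, hj2⟩ | ⟨hj1, hj2⟩
    · -- j = r, z at r+1
      have hjr : j = r := by omega
      refine ⟨Or.inl (by omega), ?_⟩
      rcases hbit with heq | ⟨k, hk, h1, h2⟩
      · exact Or.inl heq
      · rw [hjr, if_neg (by omega : ¬ (r < r))] at hk
        have hk0 : k = ⟨r - 1, h0r⟩ := Fin.ext (by simp only [val_mk]; omega)
        subst hk0
        exact Or.inr ⟨h1, h2⟩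
    · -- j = r - 1, z at r-1
      have hjr : j = r - 1 := by omega
      refine ⟨Or.inr (by omega), ?_⟩
      rcases hbit with heq | ⟨k, hk, h1, h2⟩
      · exact Or.inl heq
      · rw [hjr, if_pos h0r] at hk
        have hk0 : k = ⟨r - 1, h0r⟩ := Fin.ext (by simp only [val_mk]; omega)
        subst hk0
        exact Or.inr ⟨h1, h2⟩
  · rintro ⟨hz1 | hz1, hbit⟩
    · refine ⟨r, Or.inl ⟨ha, by omega⟩, ?_⟩
      rcases hbit with heq | ⟨h1, h2⟩
      · exact Or.inl heq
      · refine Or.inr ⟨⟨r - 1, h0r⟩, ?_, h1, h2⟩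
        rw [if_neg (by omega : ¬ (r < r))]
        simp only [val_mk]
        omega
    · refine ⟨r - 1, Or.inr ⟨hz1, show ((s, a) : BV r).2.val = r - 1 + 1 by omega⟩, ?_⟩
      rcases hbit with heq | ⟨h1, h2⟩
      · exact Or.inl heq
      · refine Or.inr ⟨⟨r - 1, h0r⟩, ?_, h1, h2⟩
        rw [if_pos h0r]

lemma twin_partner (hr : 3 ≤ r) {p : BV r} (hp : p ∈ TSet r) :
    ∃ q : BV r, q ≠ p ∧ ∀ z : BV r, (Benes r).Adj p z ↔ (Benes r).Adj q z := by
  classical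
  obtain ⟨s, a⟩ := p
  have hflipne : ∀ (k : Fin r), (Function.update s k (!(s k)), a) ≠ ((s, a) : BV r) := by
    intro k h
    have := congrFun (congrArg Prod.fst h) k
    simp at this
  rcases hp with h0 | hmid | htop
  · refine ⟨(Function.update s ⟨0, by omega⟩ (!(s ⟨0, by omega⟩)), a), hflipne _, fun z => ?_⟩
    rw [adj_level0_iff hr h0 z, adj_level0_iff hr h0 z]
    constructor
    · rintro ⟨h1, h2⟩
      exact ⟨h1, bit_or_flip _ h2⟩
    · rintro ⟨h1, h2⟩
      have := bit_or_flip ⟨0, by omega⟩ h2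
      rw [double_flip] at this
      exact ⟨h1, this⟩
  · refine ⟨(Function.update s ⟨r-1, by omega⟩ (!(s ⟨r-1, by omega⟩)), a), hflipne _, fun z => ?_⟩
    rw [adj_mid_iff hr hmid z, adj_mid_iff hr hmid z]
    constructor
    · rintro ⟨h1, h2⟩
      exact ⟨h1, bit_or_flip _ h2⟩
    · rintro ⟨h1, h2⟩
      have := bit_or_flip ⟨r-1, by omega⟩ h2
      rw [double_flip] at this
      exact ⟨h1, this⟩
  · refine ⟨(Function.update s ⟨0, by omega⟩ (!(s ⟨0, by omega⟩)), a), hflipne _, fun z => ?_⟩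
    rw [adj_top_iff hr htop z, adj_top_iff hr htop z]
    constructor
    · rintro ⟨h1, h2⟩
      exact ⟨h1, bit_or_flip _ h2⟩
    · rintro ⟨h1, h2⟩
      have := bit_or_flip ⟨0, by omega⟩ h2
      rw [double_flip] at this
      exact ⟨h1, this⟩

lemma dist_le_of_adj_iff {p q w : BV r}
    (hiff : ∀ z : BV r, (Benes r).Adj p z ↔ (Benes r).Adj q z) (hwp : w ≠ p) :
    (Benes r).dist q w ≤ (Benes r).dist p w := by
  obtain ⟨pw, hpw⟩ := (benes_reachable p w).exists_walk_length_eq_dist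
  cases pw with
  | nil => exact absurd rfl hwp
  | cons h t =>
    have hle := SimpleGraph.dist_le (SimpleGraph.Walk.cons ((hiff _).mp h) t)
    rw [← hpw]
    simpa using hle

lemma dist_eq_of_adj_iff {p q w : BV r}
    (hiff : ∀ z : BV r, (Benes r).Adj p z ↔ (Benes r).Adj q z) (hwp : w ≠ p) (hwq : w ≠ q) :
    (Benes r).dist p w = (Benes r).dist q w :=
  le_antisymm (dist_le_of_adj_iff (fun z => (hiff z).symm) hwq) (dist_le_of_adj_iff hiff hwp)

end BenesAux

namespace BenesAux

variable {r : ℕ}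

lemma TSet_ncard (hr : 3 ≤ r) : (TSet r).ncard = 3 * 2^r := by
  classical
  have h2r : 2*r < 2*r+1 := by omega
  have hmr : r < 2*r+1 := by omega
  have h0 : 0 < 2*r+1 := by omega
  have hcoe : TSet r = ↑((Finset.univ : Finset (Fin r → Bool)) ×ˢ
      ({⟨0, h0⟩, ⟨r, hmr⟩, ⟨2*r, h2r⟩} : Finset (Fin (2*r+1)))) := by
    ext ⟨s, a⟩
    simp only [TSet, Set.mem_setOf_eq, Finset.coe_sort_coe, Finset.mem_coe]
    simp only [Finset.mem_product, Finset.mem_univ, true_and, Finset.mem_insert, Finset.mem_singleton, Fin.ext_iff, Fin.val_mk]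
  rw [hcoe, Set.ncard_coe_finset]
  rw [Finset.card_product]
  rw [Finset.card_insert_of_notMem (by simp [Fin.ext_iff]; omega)]
  rw [Finset.card_insert_of_notMem (by simp [Fin.ext_iff]; omega)]
  simp [Fintype.card_fun]
  ring

lemma T_subset (hr : 3 ≤ r) {S : Set (BV r)} (hS : FTResSet (Benes r) S) :
    TSet r ⊆ S := by
  intro p hp
  obtain ⟨q, hqp, hiff⟩ := twin_partner hr hp
  by_contra hpS
  have hdist : ∀ w : BV r, w ≠ p → w ≠ q →
      (Benes r).dist p w = (Benes r).dist q w := fun w h1 h2 =>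
    dist_eq_of_adj_iff hiff h1 h2
  have hpq : p ≠ q := Ne.symm hqp
  obtain ⟨w, hwS, hw⟩ := hS.1 p q hpq
  have hwq : w = q := by
    by_contra hwq
    rcases eq_or_ne w p with rfl | hwp
    · exact hpS hwS
    · exact hw (hdist w hwp hwq)
  subst hwq
  obtain ⟨w', hw'S, hw'⟩ := hS.2 w hwS p w hpq
  have hw'w : w' ≠ w := by
    intro h
    rw [h] at hw'S
    exact hw'S.2 rfl
  rcases eq_or_ne w' p with rfl | hw'p
  · exact hpS hw'S.1
  · exact hw' (hdist w' hw'p hw'w)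

lemma FT_T (hr : 3 ≤ r) : FTResSet (Benes r) (TSet r) := by
  constructor
  · intro x y hxy
    obtain ⟨w1, w2, h1, h2, hne, d1, d2⟩ := master hr hxy
    exact ⟨w1, h1, d1⟩
  · intro v _ x y hxy
    obtain ⟨w1, w2, h1, h2, hne, d1, d2⟩ := master hr hxy
    by_cases hw : w1 = v
    · refine ⟨w2, ⟨h2, ?_⟩, d2⟩
      simp only [Set.mem_singleton_iff]
      exact fun h2v => hne (hw.trans h2v.symm)
    · exact ⟨w1, ⟨h1, by simp [hw]⟩, d1⟩

end BenesAux



open BenesAux in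
theorem benes_ftmd (r : ℕ) (hr : 3 ≤ r) : ftmd (Benes r) = 3 * 2 ^ r := by
  have hmem : 3 * 2 ^ r ∈ {n | ∃ S : Set (BV r), S.ncard = n ∧ FTResSet (Benes r) S} :=
    ⟨TSet r, TSet_ncard hr, FT_T hr⟩
  refine le_antisymm (Nat.sInf_le hmem) (le_csInf ⟨_, hmem⟩ ?_)
  rintro n ⟨S, rfl, hS⟩
  have h1 := Set.ncard_le_ncard (T_subset hr hS) (Set.toFinite S)
  rwa [TSet_ncard hr] at h1
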